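/- Let L be a finite set with at least two elements and let φ be a permutation of L. Then there exists a circular order of L that φ reverses (i.e., there exists a permutation σ of L that is a single cycle with support all of L such that φ ∘ σ ∘ φ⁻¹ = σ⁻¹) if and only if all permutation cycles of φ have length 2, except for at most two cycles of length 1; equivalently, if and only if φ ∘ φ is the identity and φ has at most two fixed points. -/

import Mathlib

open Equiv Equiv.Perm Finset

section helpers

variable {α β : Type*}

/-- permCongr as a MulEquiv. -/
def permMulEquiv (e : α ≃ β) : Perm α ≃* Perm β :=
  { e.permCongr with
    map_mul' := by
      intro p q
      ext x
      simp [Equiv.permCongr_apply, Equiv.Perm.mul_apply] }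

lemma permMulEquiv_apply (e : α ≃ β) (p : Perm α) (x : β) :
    permMulEquiv e p x = e (p (e.symm x)) := rfl

lemma isCycle_permMulEquiv (e : α ≃ β) {g : Perm α} (h : g.IsCycle) :
    (permMulEquiv e g).IsCycle := by
  obtain ⟨x, hx, hsc⟩ := h
  refine ⟨e x, ?_, ?_⟩
  · simp only [permMulEquiv_apply, Equiv.symm_apply_apply]
    intro h'
    exact hx (e.injective h')
  · intro y hy
    have hmoved : g (e.symm y) ≠ e.symm y := by
      intro h'
      apply hy
      simp [permMulEquiv_apply, h']
    obtain ⟨k, hk⟩ := hsc hmoved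
    refine ⟨k, ?_⟩
    have : (permMulEquiv e g) ^ k = permMulEquiv e (g ^ k) := (map_zpow (permMulEquiv e) g k).symm
    rw [this, permMulEquiv_apply, Equiv.symm_apply_apply, hk, Equiv.apply_symm_apply]

lemma card_fixed_permMulEquiv [Fintype α] [DecidableEq α] [Fintype β] [DecidableEq β]
    (e : α ≃ β) (g : Perm α) :
    (Finset.univ.filter fun x : β => permMulEquiv e g x = x).card
      = (Finset.univ.filter fun z : α => g z = z).card := by
  apply Finset.card_bij' (fun x _ => e.symm x) (fun z _ => e z)
  · intro x hx
    simp only [mem_filter, mem_univ, true_and] at hx ⊢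
    rw [permMulEquiv_apply] at hx
    nth_rewrite 2 [← hx]
    simp
  · intro z hz
    simp only [mem_filter, mem_univ, true_and] at hz ⊢
    rw [permMulEquiv_apply]
    simp [hz]
  · intro x _; simp
  · intro z _; simp

lemma fixed_card_add_support_card [Fintype α] [DecidableEq α] (g : Perm α) :
    (Finset.univ.filter fun x : α => g x = x).card + g.support.card = Fintype.card α := by
  classical
  have : g.support = Finset.univ.filter fun x : α => ¬ g x = x := by
    ext x; simp [Equiv.Perm.mem_support]
  rw [this]
  exact Finset.card_filter_add_card_filter_not _

lemma invol_cycleType [Fintype α] [DecidableEq α] {ψ : Perm α} (h : ψ * ψ = 1) :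
    ψ.cycleType = Multiset.replicate (ψ.support.card / 2) 2 ∧ ψ.support.card % 2 = 0 := by
  have hsq : ψ ^ 2 = 1 := by rw [pow_two]; exact h
  have h2 : ∀ m ∈ ψ.cycleType, m = 2 := by
    intro m hm
    have hge := Equiv.Perm.two_le_of_mem_cycleType hm
    have hdvd : m ∣ 2 := by
      have h1 : m ∣ ψ.cycleType.lcm := Multiset.dvd_lcm hm
      rw [Equiv.Perm.lcm_cycleType] at h1
      exact h1.trans (orderOf_dvd_of_pow_eq_one hsq)
    have := Nat.le_of_dvd (by norm_num) hdvd
    omega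
  have hrep : ψ.cycleType = Multiset.replicate (Multiset.card ψ.cycleType) 2 :=
    Multiset.eq_replicate_card.mpr h2
  have hsum := Equiv.Perm.sum_cycleType ψ
  rw [hrep, Multiset.sum_replicate, smul_eq_mul] at hsum
  constructor
  · rw [hrep]; congr 1; omega
  · omega

end helpers

section model

variable (n : ℕ) [NeZero n]

/-- the rotation -/
def rot : Perm (ZMod n) := Equiv.addLeft (1 : ZMod n)

/-- the reflection -/
def refl' (a : ZMod n) : Perm (ZMod n) :=
  Function.Involutive.toPerm (fun x => a - x) (fun x => by ring_nf)

lemma refl'_apply (a x : ZMod n) : refl' n a x = a - x := rfl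

lemma refl'_invol (a : ZMod n) : refl' n a * refl' n a = 1 := by
  ext x
  simp [Equiv.Perm.mul_apply, refl'_apply]

lemma refl'_conj_rot (a : ZMod n) : refl' n a * rot n * (refl' n a)⁻¹ = (rot n)⁻¹ := by
  have hinv : (refl' n a)⁻¹ = refl' n a := inv_eq_of_mul_eq_one_right (refl'_invol n a)
  ext x
  rw [hinv]
  simp only [Equiv.Perm.mul_apply, refl'_apply, rot, Equiv.Perm.inv_def, Equiv.addLeft_symm]
  show a - (1 + (a - x)) = -1 + x
  ring

lemma rot_pow (k : ℕ) (x : ZMod n) : ((rot n) ^ k) x = (k : ZMod n) + x := by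
  rw [rot, Equiv.nsmul_addLeft]
  show (k • (1 : ZMod n)) + x = (k : ZMod n) + x
  simp

lemma rot_isCycle (hn : 1 < n) : (rot n).IsCycle := by
  haveI : Fact (1 < n) := ⟨hn⟩
  refine ⟨0, ?_, ?_⟩
  · show (1 : ZMod n) + 0 ≠ 0
    simpa using one_ne_zero
  · intro y _
    refine ⟨(y.val : ℤ), ?_⟩
    rw [zpow_natCast, rot_pow]
    simp [ZMod.natCast_zmod_val]

lemma rot_support (hn : 1 < n) : (rot n).support = Finset.univ := by
  haveI : Fact (1 < n) := ⟨hn⟩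
  apply Finset.eq_univ_iff_forall.mpr
  intro x
  rw [Equiv.Perm.mem_support]
  show (1 : ZMod n) + x ≠ x
  intro h
  have h1 : (1 : ZMod n) + x = 0 + x := by rw [zero_add]; exact h
  exact one_ne_zero (add_right_cancel h1)

lemma refl'_fixed_iff (a x : ZMod n) : refl' n a x = x ↔ x + x = a := by
  rw [refl'_apply, sub_eq_iff_eq_add]
  exact eq_comm

end model


lemma isCyclic_zpowers {G : Type*} [Group G] (g : G) : IsCyclic (Subgroup.zpowers g) := by
  refine ⟨⟨g, Subgroup.mem_zpowers g⟩, ?_⟩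
  rintro ⟨x, hx⟩
  obtain ⟨k, hk⟩ := Subgroup.mem_zpowers_iff.mp hx
  exact ⟨k, Subtype.ext (by rw [SubgroupClass.coe_zpow]; exact hk)⟩

lemma count_refl_one (n : ℕ) [NeZero n] (hn : n % 2 = 1) :
    (Finset.univ.filter fun x : ZMod n => refl' n 0 x = x).card = 1 := by
  have hset : (Finset.univ.filter fun x : ZMod n => refl' n 0 x = x) = {0} := by
    ext x
    simp only [mem_filter, mem_univ, true_and, mem_singleton, refl'_fixed_iff]
    constructor
    · intro h
      have hx : ((x.val + x.val : ℕ) : ZMod n) = 0 := by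
        push_cast [ZMod.natCast_zmod_val]
        exact h
      rw [ZMod.natCast_eq_zero_iff] at hx
      have hco : Nat.Coprime n 2 :=
        Nat.coprime_comm.mp ((Nat.Prime.coprime_iff_not_dvd Nat.prime_two).mpr (by omega))
      have hx2 : n ∣ 2 * x.val := by
        have : x.val + x.val = 2 * x.val := by omega
        rwa [this] at hx
      have hdvd : n ∣ x.val := hco.dvd_of_dvd_mul_left hx2
      have hlt := ZMod.val_lt x
      have hv0 : x.val = 0 := Nat.eq_zero_of_dvd_of_lt hdvd hlt
      calc x = ((x.val : ℕ) : ZMod n) := (ZMod.natCast_zmod_val x).symm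
        _ = 0 := by rw [hv0]; simp
    · rintro rfl; simp
  rw [hset]
  simp

lemma count_refl_zero (n : ℕ) [NeZero n] (hn : n % 2 = 0) :
    (Finset.univ.filter fun x : ZMod n => refl' n 1 x = x).card = 0 := by
  rw [Finset.card_eq_zero, Finset.filter_eq_empty_iff]
  intro x _
  rw [refl'_fixed_iff]
  intro h
  have h2 : (2 : ℕ) ∣ n := by omega
  have hc := congrArg (ZMod.castHom h2 (ZMod 2)) h
  rw [map_add, map_one] at hc
  set y := ZMod.castHom h2 (ZMod 2) x with hy
  have hyy : y + y = 0 := by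
    rw [← two_mul, show (2 : ZMod 2) = 0 from by decide, zero_mul]
  rw [hyy] at hc
  exact absurd hc (by decide)

lemma count_refl_two (n : ℕ) [NeZero n] (hn : n % 2 = 0) (h2 : 2 ≤ n) :
    (Finset.univ.filter fun x : ZMod n => refl' n 0 x = x).card = 2 := by
  set m := n / 2 with hm
  have hnm : n = 2 * m := by omega
  have hm1 : 1 ≤ m := by omega
  have hmlt : m < n := by omega
  have hset : (Finset.univ.filter fun x : ZMod n => refl' n 0 x = x)
      = {0, (m : ZMod n)} := by
    ext x
    simp only [mem_filter, mem_univ, true_and, mem_insert, mem_singleton, refl'_fixed_iff]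
    constructor
    · intro h
      have hx : ((x.val + x.val : ℕ) : ZMod n) = 0 := by
        push_cast [ZMod.natCast_zmod_val]
        exact h
      rw [ZMod.natCast_eq_zero_iff] at hx
      have hlt := ZMod.val_lt x
      have hv : x.val = 0 ∨ x.val = m := by
        obtain ⟨c, hc⟩ := hx
        have hcl : n * c < n * 2 := by rw [← hc]; omega
        have hc2 : c < 2 := Nat.lt_of_mul_lt_mul_left hcl
        interval_cases c <;> omega
      rcases hv with hv | hv
      · left
        calc x = ((x.val : ℕ) : ZMod n) := (ZMod.natCast_zmod_val x).symm
          _ = 0 := by rw [hv]; simp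
      · right
        calc x = ((x.val : ℕ) : ZMod n) := (ZMod.natCast_zmod_val x).symm
          _ = (m : ZMod n) := by rw [hv]
    · intro h
      rcases h with rfl | rfl
      · simp
      · have : ((m : ZMod n)) + ((m : ZMod n)) = ((m + m : ℕ) : ZMod n) := by push_cast; ring
        rw [this, show m + m = n by omega, ZMod.natCast_self]
  rw [hset]
  rw [Finset.card_insert_of_notMem, Finset.card_singleton]
  rw [Finset.mem_singleton]
  intro h0
  have := congrArg ZMod.val h0
  rw [ZMod.val_zero, ZMod.val_cast_of_lt hmlt] at this
  omega

theorem stmt_5 {L : Type*} [Fintype L] [DecidableEq L]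
    (hL : 2 ≤ Fintype.card L) (φ : Equiv.Perm L) :
    (∃ σ : Equiv.Perm L, σ.IsCycle ∧ σ.support = Finset.univ ∧ φ * σ * φ⁻¹ = σ⁻¹) ↔
      (φ * φ = 1 ∧ (Finset.univ.filter fun x : L => φ x = x).card ≤ 2) := by
  classical
  constructor
  · rintro ⟨σ, hσ, hsupp, hrev⟩
    have hrel : φ * σ = σ⁻¹ * φ := by
      calc φ * σ = (φ * σ * φ⁻¹) * φ := by group
        _ = σ⁻¹ * φ := by rw [hrev]
    have hφk : ∀ k : ℕ, φ * σ ^ k = (σ ^ k)⁻¹ * φ := by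
      intro k
      induction k with
      | zero => simp
      | succ k ih =>
        calc φ * σ ^ (k + 1) = (φ * σ ^ k) * σ := by rw [pow_succ, mul_assoc]
          _ = (σ ^ k)⁻¹ * (φ * σ) := by rw [ih, mul_assoc]
          _ = (σ ^ k)⁻¹ * (σ⁻¹ * φ) := by rw [hrel]
          _ = (σ ^ (k + 1))⁻¹ * φ := by group
    have hmoved : ∀ y : L, σ y ≠ y := fun y =>
      Equiv.Perm.mem_support.mp (hsupp ▸ Finset.mem_univ y)
    obtain ⟨x0, hx0, -⟩ := id hσ
    obtain ⟨a, ha⟩ := hσ.exists_pow_eq hx0 (hmoved (φ x0))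
    have hfix : (φ * φ) x0 = x0 := by
      have h1 : φ (φ x0) = ((σ ^ a)⁻¹ * φ) x0 := by
        rw [← hφk a, Equiv.Perm.mul_apply, ha]
      rw [Equiv.Perm.mul_apply, h1, Equiv.Perm.mul_apply, ← ha]
      exact Equiv.symm_apply_apply _ _
    constructor
    · ext y
      obtain ⟨k, hk⟩ := hσ.exists_pow_eq hx0 (hmoved y)
      have h2 : φ * (σ ^ k)⁻¹ = σ ^ k * φ := by
        have h : (φ * (σ ^ k)⁻¹) * σ ^ k = (σ ^ k * φ) * σ ^ k := by
          rw [mul_assoc (σ ^ k) φ (σ ^ k), hφk k]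
          group
        exact mul_right_cancel h
      have hcomm : (φ * φ) * σ ^ k = σ ^ k * (φ * φ) := by
        calc (φ * φ) * σ ^ k = φ * (φ * σ ^ k) := by rw [mul_assoc]
          _ = φ * ((σ ^ k)⁻¹ * φ) := by rw [hφk k]
          _ = (φ * (σ ^ k)⁻¹) * φ := by rw [mul_assoc]
          _ = σ ^ k * (φ * φ) := by rw [h2, mul_assoc]
      show φ (φ y) = y
      calc φ (φ y) = ((φ * φ) * σ ^ k) x0 := by simp only [Equiv.Perm.mul_apply, hk]
        _ = (σ ^ k * (φ * φ)) x0 := by rw [hcomm]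
        _ = (σ ^ k) x0 := by rw [Equiv.Perm.mul_apply, hfix]
        _ = y := hk
    · by_contra hc
      push_neg at hc
      obtain ⟨p, q, r, hp, hq, hr, hpq, hpr, hqr⟩ := Finset.two_lt_card_iff.mp hc
      simp only [Finset.mem_filter, Finset.mem_univ, true_and] at hp hq hr
      obtain ⟨i, hi⟩ := hσ.exists_pow_eq (hmoved p) (hmoved q)
      obtain ⟨j, hj⟩ := hσ.exists_pow_eq (hmoved p) (hmoved r)
      have lem : ∀ (i : ℕ) (q : L), (σ ^ i) p = q → φ q = q → (σ ^ i) * (σ ^ i) = 1 := by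
        intro i q hiq hq
        have h1 : φ q = ((σ ^ i)⁻¹ * φ) p := by
          rw [← hφk i, Equiv.Perm.mul_apply, hiq]
        have h2 : (σ ^ i)⁻¹ p = q := by
          rw [← hq, h1, Equiv.Perm.mul_apply, hp]
        have h3 : (σ ^ (i + i)) p = p := by
          rw [pow_add, Equiv.Perm.mul_apply, hiq, ← h2]
          exact Equiv.apply_symm_apply _ _
        have h4 : σ ^ (i + i) = 1 := (hσ.pow_eq_one_iff' (hmoved p)).mpr h3
        rwa [pow_add] at h4
      have e1 := lem i q hi hq
      have e2 := lem j r hj hr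
      have ne1 : σ ^ i ≠ 1 := by
        intro h
        rw [h, Equiv.Perm.one_apply] at hi
        exact hpq hi
      have ne2 : σ ^ j ≠ 1 := by
        intro h
        rw [h, Equiv.Perm.one_apply] at hj
        exact hpr hj
      have ne12 : σ ^ i ≠ σ ^ j := by
        intro h
        rw [h, hj] at hi
        exact hqr hi.symm
      haveI := isCyclic_zpowers σ
      have hle := IsCyclic.card_pow_eq_one_le (α := Subgroup.zpowers σ) (n := 2) (by norm_num)
      set H := Subgroup.zpowers σ with hH
      have memi : σ ^ i ∈ H := H.pow_mem (Subgroup.mem_zpowers σ) i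
      have memj : σ ^ j ∈ H := H.pow_mem (Subgroup.mem_zpowers σ) j
      have hgt : 2 < (Finset.univ.filter fun a : H => a ^ 2 = 1).card := by
        rw [Finset.two_lt_card_iff]
        refine ⟨1, ⟨σ ^ i, memi⟩, ⟨σ ^ j, memj⟩, ?_, ?_, ?_, ?_, ?_, ?_⟩
        · simp
        · simp only [Finset.mem_filter, Finset.mem_univ, true_and, Subtype.ext_iff,
            SubgroupClass.coe_pow, OneMemClass.coe_one, pow_two]
          exact e1
        · simp only [Finset.mem_filter, Finset.mem_univ, true_and, Subtype.ext_iff,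
            SubgroupClass.coe_pow, OneMemClass.coe_one, pow_two]
          exact e2
        · intro h
          exact ne1 (congrArg Subtype.val h).symm
        · intro h
          exact ne2 (congrArg Subtype.val h).symm
        · intro h
          exact ne12 (congrArg Subtype.val h)
      have := hgt.trans_le hle
      omega
  · rintro ⟨hinv, hfle⟩
    set n := Fintype.card L with hn
    haveI : NeZero n := ⟨by omega⟩
    set f := (Finset.univ.filter fun x : L => φ x = x).card with hf
    have hfn : f + φ.support.card = n := fixed_card_add_support_card φ
    obtain ⟨hct, hpar⟩ := invol_cycleType hinv
    have e : ZMod n ≃ L := Fintype.equivOfCardEq (by simp [ZMod.card, hn])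
    have hmodel : ∃ a : ZMod n,
        (Finset.univ.filter fun z : ZMod n => refl' n a z = z).card = f := by
      have hcases : f = 0 ∨ f = 1 ∨ f = 2 := by omega
      rcases hcases with hF | hF | hF
      · exact ⟨1, by rw [count_refl_zero n (by omega), hF]⟩
      · exact ⟨0, by rw [count_refl_one n (by omega), hF]⟩
      · exact ⟨0, by rw [count_refl_two n (by omega) (by omega), hF]⟩
    obtain ⟨a, hacount⟩ := hmodel
    set r' := permMulEquiv e (refl' n a) with hr'
    set ρ := permMulEquiv e (rot n) with hρ
    have hr'invol : r' * r' = 1 := by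
      rw [hr', ← map_mul, refl'_invol, map_one]
    have hconj' : r' * ρ * r'⁻¹ = ρ⁻¹ := by
      rw [hr', hρ, ← map_inv, ← map_inv, ← map_mul, ← map_mul, refl'_conj_rot]
    have hρcyc : ρ.IsCycle := isCycle_permMulEquiv e (rot_isCycle n (by omega))
    have hρsupp : ρ.support = Finset.univ := by
      apply Finset.eq_univ_iff_forall.mpr
      intro x
      rw [Equiv.Perm.mem_support]
      intro hx
      have : rot n (e.symm x) ≠ e.symm x :=
        Equiv.Perm.mem_support.mp ((rot_support n (by omega)) ▸ Finset.mem_univ (e.symm x))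
      apply this
      have := congrArg e.symm hx
      rwa [hρ, permMulEquiv_apply, Equiv.symm_apply_apply] at this
    have hr'fix : (Finset.univ.filter fun x : L => r' x = x).card = f := by
      rw [hr', card_fixed_permMulEquiv]
      exact hacount
    have hr'suppcard : r'.support.card = φ.support.card := by
      have h1 := fixed_card_add_support_card r'
      rw [hr'fix] at h1
      omega
    obtain ⟨hct', _⟩ := invol_cycleType hr'invol
    have hconjphi : IsConj r' φ := by
      rw [Equiv.Perm.isConj_iff_cycleType_eq, hct', hct, hr'suppcard]
    obtain ⟨c, hc⟩ := isConj_iff.mp hconjphi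
    refine ⟨c * ρ * c⁻¹, hρcyc.conj, ?_, ?_⟩
    · rw [Equiv.Perm.support_conj, hρsupp]
      exact Finset.map_univ_equiv _
    · calc φ * (c * ρ * c⁻¹) * φ⁻¹
          = (c * r' * c⁻¹) * (c * ρ * c⁻¹) * (c * r' * c⁻¹)⁻¹ := by rw [hc]
        _ = c * (r' * ρ * r'⁻¹) * c⁻¹ := by group
        _ = c * ρ⁻¹ * c⁻¹ := by rw [hconj']
        _ = (c * ρ * c⁻¹)⁻¹ := by group
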